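/- Let π be a torsion-free group such that the centralizer Z({g}) of every nontrivial element g ∈ π is cyclic. Then π satisfies Property N: for every a ∈ π, every finite subset S ⊆ π, and every integer n ≥ 1, if aⁿ ∈ Z(S) then a ∈ Z(S). -/

import Mathlib

/-- A monoid is torsion-free if no nontrivial element has finite order
(the definition `Monoid.IsTorsionFree` of the older Mathlib, since removed). -/
def Monoid.IsTorsionFree (G : Type*) [Monoid G] : Prop :=
  ∀ g : G, g ≠ 1 → ¬IsOfFinOrder g

/-- A torsion-free group in which the centralizer of every nontrivial element
is cyclic satisfies Property N: if `aⁿ ∈ Z(S)` for some finite set `S` and some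
`n ≥ 1`, then `a ∈ Z(S)`. -/
theorem stmt7 {π : Type*} [Group π] (htf : Monoid.IsTorsionFree π)
    (hcyc : ∀ g : π, g ≠ 1 → ∃ x : π, Subgroup.centralizer {g} = Subgroup.zpowers x) :
    ∀ (a : π) (S : Finset π) (n : ℕ), 1 ≤ n →
      a ^ n ∈ Subgroup.centralizer (S : Set π) → a ∈ Subgroup.centralizer (S : Set π) := by
  intro a S n hn hmem
  by_cases ha : a = 1
  · rw [ha]; exact Subgroup.one_mem _
  have hne : a ^ n ≠ 1 := by
    intro h
    exact htf a ha (isOfFinOrder_iff_pow_eq_one.mpr ⟨n, hn, h⟩)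
  obtain ⟨x, hx⟩ := hcyc (a ^ n) hne
  have hamem : a ∈ Subgroup.centralizer {a ^ n} := by
    rw [Subgroup.mem_centralizer_iff]
    intro h hh
    simp only [Set.mem_singleton_iff] at hh
    subst hh
    exact (Commute.self_pow a n).symm
  rw [hx, Subgroup.mem_zpowers_iff] at hamem
  obtain ⟨m, hm⟩ := hamem
  rw [Subgroup.mem_centralizer_iff] at hmem ⊢
  intro s hs
  have hsmem : s ∈ Subgroup.centralizer {a ^ n} := by
    rw [Subgroup.mem_centralizer_iff]
    intro h hh
    simp only [Set.mem_singleton_iff] at hh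
    subst hh
    exact (hmem s hs).symm
  rw [hx, Subgroup.mem_zpowers_iff] at hsmem
  obtain ⟨k, hk⟩ := hsmem
  rw [← hm, ← hk]
  exact ((Commute.refl x).zpow_zpow k m)
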